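/- Let C ≥ 2 be an integer, s ∈ ℝ^C, y ∈ {1,…,C}, and 1 ≤ K ≤ C−1. Then Σ_{k=1}^{K} 𝟙[s_y ≤ (s_{∖y})_{[k]}] = −1 + Σ_{k=1}^{K+1} 𝟙[s_y ≤ s_{[k]}], where 𝟙 is the indicator function. -/

import Mathlib

/-- The `k`-th largest entry (1-indexed, counted with multiplicity) of the
vector `s ∈ ℝ^C`. -/
noncomputable def kthLargest {C : ℕ} (s : Fin C → ℝ) (k : ℕ) : ℝ :=
  ((List.ofFn s).insertionSort (· ≤ ·)).getD (C - k) 0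

/-- The `k`-th largest entry (1-indexed, counted with multiplicity) of the vector in
`ℝ^{C−1}` obtained from `s ∈ ℝ^C` by deleting its `y`-th entry. -/
noncomputable def kthLargestDel {C : ℕ} (s : Fin C → ℝ) (y : Fin C) (k : ℕ) : ℝ :=
  (((List.ofFn s).eraseIdx y).insertionSort (· ≤ ·)).getD (C - 1 - k) 0

lemma aux_getD_ge_iff {l : List ℝ} (hs : l.Pairwise (· ≤ ·)) (x : ℝ) {k : ℕ}
    (hk1 : 1 ≤ k) (hkn : k ≤ l.length) :
    x ≤ l.getD (l.length - k) 0 ↔ k ≤ l.countP (fun a => decide (x ≤ a)) := by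
  set p : ℝ → Bool := fun a => decide (x ≤ a) with hp
  set n := l.length with hn
  have hlt : n - k < n := Nat.sub_lt (by omega) hk1
  rw [List.getD_eq_getElem _ _ hlt]
  constructor
  · intro h
    have hd : l[n - k] :: l.drop (n - k + 1) = l.drop (n - k) :=
      List.getElem_cons_drop hlt
    have hsd : (l.drop (n - k)).Pairwise (· ≤ ·) := hs.drop
    rw [← hd] at hsd
    rw [List.pairwise_cons] at hsd
    have hall : ∀ a ∈ l.drop (n - k), p a := by
      intro a ha
      rw [← hd] at ha
      rcases List.mem_cons.mp ha with rfl | ha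
      · simpa [hp] using h
      · have := hsd.1 a ha
        simp only [hp, decide_eq_true_eq]
        exact le_trans h this
    have hcd : (l.drop (n - k)).countP p = (l.drop (n - k)).length :=
      List.countP_eq_length.mpr hall
    have hsplit : l.countP p = (l.take (n - k)).countP p + (l.drop (n - k)).countP p := by
      conv_lhs => rw [← List.take_append_drop (n - k) l]
      exact List.countP_append
    have hlen : (l.drop (n - k)).length = k := by
      rw [List.length_drop]; omega
    omega
  · intro h
    by_contra hcon
    push_neg at hcon
    have hzero : (l.take (n - k + 1)).countP p = 0 := by
      rw [List.countP_eq_zero]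
      intro a ha
      obtain ⟨i, hi, rfl⟩ := List.mem_iff_getElem.mp ha
      have hi' : i < n - k + 1 := lt_of_lt_of_le hi (by simp [List.length_take])
      have hi'' : i < n := by omega
      rw [List.getElem_take]
      have hle : l[i] ≤ l[n - k] := by
        have := hs.rel_get_of_le (a := ⟨i, hi''⟩) (b := ⟨n - k, hlt⟩)
          (by simp only [Fin.le_def]; omega)
        simpa using this
      simp only [hp, decide_eq_true_eq]
      push_neg
      exact lt_of_le_of_lt hle hcon
    have hsplit : l.countP p = (l.take (n - k + 1)).countP p + (l.drop (n - k + 1)).countP p := by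
      conv_lhs => rw [← List.take_append_drop (n - k + 1) l]
      exact List.countP_append
    have hled : (l.drop (n - k + 1)).countP p ≤ (l.drop (n - k + 1)).length :=
      List.countP_le_length
    have hlen : (l.drop (n - k + 1)).length = k - 1 := by
      rw [List.length_drop]; omega
    omega

lemma aux_sum_ind {l : List ℝ} (hs : l.Pairwise (· ≤ ·)) (x : ℝ) {K : ℕ} (hK : K ≤ l.length) :
    (∑ k ∈ Finset.Icc 1 K, if x ≤ l.getD (l.length - k) 0 then (1 : ℤ) else 0)
      = min K (l.countP (fun a => decide (x ≤ a))) := by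
  set m := l.countP (fun a => decide (x ≤ a)) with hm
  have hcongr : ∀ k ∈ Finset.Icc 1 K,
      (if x ≤ l.getD (l.length - k) 0 then (1 : ℤ) else 0)
        = (if k ≤ m then (1 : ℤ) else 0) := by
    intro k hk
    rw [Finset.mem_Icc] at hk
    have := aux_getD_ge_iff hs x hk.1 (le_trans hk.2 hK)
    by_cases hc : k ≤ m
    · rw [if_pos hc, if_pos (this.mpr hc)]
    · rw [if_neg hc, if_neg (fun hh => hc (this.mp hh))]
  rw [Finset.sum_congr rfl hcongr]
  have : (∑ k ∈ Finset.Icc 1 K, if k ≤ m then (1 : ℤ) else 0)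
      = ((Finset.Icc 1 K).filter (fun k => k ≤ m)).card := by
    rw [Finset.card_filter]
    push_cast
    rfl
  rw [this]
  have hfe : (Finset.Icc 1 K).filter (fun k => k ≤ m) = Finset.Icc 1 (min K m) := by
    ext a
    simp only [Finset.mem_filter, Finset.mem_Icc, le_min_iff]
    omega
  rw [hfe, Nat.card_Icc]
  push_cast
  omega

/-- Reformulation of the AUTKC objective (Theorem 2 of the paper):
`Σ_{k=1}^{K} 𝟙[s_y ≤ (s_{∖y})_{[k]}] = −1 + Σ_{k=1}^{K+1} 𝟙[s_y ≤ s_{[k]}]`,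
under the worst-case tie-breaking encoded by the non-strict inequalities. -/
theorem autkc_objective_reformulation
    (C : ℕ) (hC : 2 ≤ C) (s : Fin C → ℝ) (y : Fin C) (K : ℕ)
    (hK1 : 1 ≤ K) (hKC : K ≤ C - 1) :
    (∑ k ∈ Finset.Icc 1 K, if s y ≤ kthLargestDel s y k then (1 : ℤ) else 0)
      = -1 + ∑ k ∈ Finset.Icc 1 (K + 1), if s y ≤ kthLargest s k then (1 : ℤ) else 0 := by
  set x := s y with hx
  set p : ℝ → Bool := fun a => decide (x ≤ a) with hp
  set l0 := List.ofFn s with hl0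
  set L := l0.insertionSort (· ≤ ·) with hL
  set L' := (l0.eraseIdx (y : ℕ)).insertionSort (· ≤ ·) with hL'
  have hl0len : l0.length = C := by simp [hl0]
  have hyC : (y : ℕ) < C := y.isLt
  have hLlen : L.length = C := by
    rw [hL, (List.perm_insertionSort _ _).length_eq, hl0len]
  have hL'len : L'.length = C - 1 := by
    rw [hL', (List.perm_insertionSort _ _).length_eq, List.length_eraseIdx]
    rw [hl0len]
    simp [hyC]
  have hsL : L.Pairwise (· ≤ ·) := List.pairwise_insertionSort _ _
  have hsL' : L'.Pairwise (· ≤ ·) := List.pairwise_insertionSort _ _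
  -- count relation
  have hcL : L.countP p = l0.countP p := (List.perm_insertionSort _ _).countP_eq p
  have hcL' : L'.countP p = (l0.eraseIdx (y : ℕ)).countP p :=
    (List.perm_insertionSort _ _).countP_eq p
  have hylt : (y : ℕ) < l0.length := by rw [hl0len]; exact hyC
  have hget : l0[(y : ℕ)] = x := by
    simp [hl0, hx]
  have hsplit0 : l0.countP p = (l0.take (y : ℕ)).countP p + (l0.drop (y : ℕ)).countP p := by
    conv_lhs => rw [← List.take_append_drop (y : ℕ) l0]
    exact List.countP_append
  have hdrop : l0[(y : ℕ)] :: l0.drop ((y : ℕ) + 1) = l0.drop (y : ℕ) :=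
    List.getElem_cons_drop hylt
  have hcdrop : (l0.drop (y : ℕ)).countP p = (l0.drop ((y : ℕ) + 1)).countP p + 1 := by
    rw [← hdrop, List.countP_cons, hget]
    simp [hp]
  have herase : (l0.eraseIdx (y : ℕ)).countP p
      = (l0.take (y : ℕ)).countP p + (l0.drop ((y : ℕ) + 1)).countP p := by
    rw [List.eraseIdx_eq_take_drop_succ]
    exact List.countP_append
  have hcount : L.countP p = L'.countP p + 1 := by
    rw [hcL, hcL', hsplit0, hcdrop, herase]; ring
  -- rewrite the two sums
  have hlhs : (∑ k ∈ Finset.Icc 1 K, if x ≤ kthLargestDel s y k then (1 : ℤ) else 0)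
      = min K (L'.countP p) := by
    have := aux_sum_ind hsL' x (K := K) (by rw [hL'len]; exact hKC)
    rw [← this]
    apply Finset.sum_congr rfl
    intro k _
    congr 1
    rw [kthLargestDel, hL'len]
  have hrhs : (∑ k ∈ Finset.Icc 1 (K + 1), if x ≤ kthLargest s k then (1 : ℤ) else 0)
      = min (K + 1) (L.countP p) := by
    have := aux_sum_ind hsL x (K := K + 1) (by rw [hLlen]; omega)
    rw [← this]
    apply Finset.sum_congr rfl
    intro k _
    congr 1
    rw [kthLargest, hLlen]
  rw [hlhs, hrhs, hcount]
  have : min (K + 1) (L'.countP p + 1) = min K (L'.countP p) + 1 := by omega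
  rw [this]
  push_cast
  ring
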